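/- Let n be an odd integer with n > 2 and let k be a positive integer. If the Diophantine equation x^2 - k*x*y + y^2 = 2^n has a positive integer solution (x, y), then k is even and k ≤ 2^n - 2. -/

import Mathlib

-- 2^n is not a perfect square when n is odd
lemma aux_sq_ne_pow (n : ℕ) (hodd : Odd n) (y : ℤ) : y ^ 2 ≠ 2 ^ n := by
  intro h
  have hm : y.natAbs ^ 2 = 2 ^ n := by
    have := congrArg Int.natAbs h
    simpa [Int.natAbs_pow] using this
  have hfac : (y.natAbs ^ 2).factorization 2 = ((2:ℕ) ^ n).factorization 2 := by rw [hm]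
  rw [Nat.factorization_pow, Nat.Prime.factorization_pow Nat.prime_two] at hfac
  simp at hfac
  exact (Nat.not_even_iff_odd.mpr hodd) ⟨y.natAbs.factorization 2, by omega⟩

-- if k is odd, no positive solutions for any odd n
lemma aux_no_odd_k (k : ℤ) (hkodd : Odd k) :
    ∀ n : ℕ, Odd n → ∀ x y : ℤ, 0 < x → 0 < y →
      x ^ 2 - k * x * y + y ^ 2 = 2 ^ n → False := by
  intro n
  induction n using Nat.strong_induction_on with
  | _ n ih =>
  intro hodd x y hx hy heq
  have hn1 : 1 ≤ n := by rcases hodd with ⟨t, ht⟩; omega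
  have heven : Even ((2:ℤ) ^ n) := by
    obtain ⟨m, rfl⟩ : ∃ m, n = m + 1 := ⟨n - 1, by omega⟩
    exact ⟨2 ^ m, by ring⟩
  have heven' : Even (x ^ 2 - k * x * y + y ^ 2) := heq ▸ heven
  have hk' := Int.not_even_iff_odd.mpr hkodd
  rcases Int.even_or_odd x with hx2 | hx2 <;> rcases Int.even_or_odd y with hy2 | hy2
  · -- both even: descend
    obtain ⟨a, rfl⟩ := hx2
    obtain ⟨b, rfl⟩ := hy2
    have ha : 0 < a := by linarith
    have hb : 0 < b := by linarith
    rcases Nat.lt_or_ge n 3 with hn3 | hn3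
    · -- n = 1
      have hn : n = 1 := by rcases hodd with ⟨t, ht⟩; omega
      subst hn
      have h4 : (4:ℤ) * (a ^ 2 - k * a * b + b ^ 2) = 2 := by linarith [heq]
      omega
    · have hstep : a ^ 2 - k * a * b + b ^ 2 = 2 ^ (n - 2) := by
        have h2n : (2:ℤ) ^ n = 4 * 2 ^ (n - 2) := by
          have hpa : (2:ℤ) ^ (n - 2) * 2 ^ 2 = 2 ^ n := by
            rw [← pow_add]; congr 1; omega
          rw [← hpa]; ring
        have h4 : (4:ℤ) * (a ^ 2 - k * a * b + b ^ 2) = 4 * 2 ^ (n - 2) := by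
          rw [h2n] at heq; linarith
        linarith
      exact ih (n - 2) (by omega) (by rcases hodd with ⟨t, ht⟩; exact ⟨t - 1, by omega⟩)
        a b ha hb hstep
  · rw [← Int.not_even_iff_odd] at hy2
    simp [parity_simps, hk', hx2, hy2] at heven'
  · rw [← Int.not_even_iff_odd] at hx2
    simp [parity_simps, hk', hx2, hy2] at heven'
  · rw [← Int.not_even_iff_odd] at hx2 hy2
    simp [parity_simps, hk', hx2, hy2] at heven'

-- Vieta jumping: any positive solution forces k ≤ 2^n - 2
lemma aux_bound (n : ℕ) (hodd : Odd n) (k : ℤ) (hk : 0 < k) :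
    ∀ s : ℕ, ∀ x y : ℤ, (x + y).toNat = s → 0 < x → 0 < y →
      x ^ 2 - k * x * y + y ^ 2 = 2 ^ n → k ≤ 2 ^ n - 2 := by
  intro s
  induction s using Nat.strong_induction_on with
  | _ s ih =>
  have main : ∀ x y : ℤ, (x + y).toNat = s → 0 < x → 0 < y → y ≤ x →
      x ^ 2 - k * x * y + y ^ 2 = 2 ^ n → k ≤ 2 ^ n - 2 := by
    intro x y hs hx hy hxy heq
    set x' : ℤ := k * y - x with hx'def
    have heq' : x' ^ 2 - k * x' * y + y ^ 2 = 2 ^ n := by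
      rw [hx'def]; linear_combination heq
    have hprod : x * x' = y ^ 2 - 2 ^ n := by
      rw [hx'def]; linear_combination -heq
    rcases lt_trichotomy x' 0 with h | h | h
    · -- x' < 0 : k is small
      have h1 : x' ≤ -1 := by omega
      have hy1 : 1 ≤ y := hy
      have hk1 : 1 ≤ k := hk
      nlinarith [heq', mul_le_mul_of_nonneg_left (mul_le_mul (neg_le_neg h1) hy1 (by norm_num) (by linarith : (0:ℤ) ≤ -x')) (le_of_lt hk), sq_nonneg x', sq_nonneg y]
    · -- x' = 0 : y² = 2^n impossible
      exact absurd (by rw [h, mul_zero] at hprod; linarith : y ^ 2 = 2 ^ n)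
        (aux_sq_ne_pow n hodd y)
    · -- x' > 0 : descend
      have hpow : (0:ℤ) < 2 ^ n := by positivity
      have hx'lt : x' < y := by
        nlinarith [hprod, mul_le_mul_of_nonneg_left hxy (le_of_lt hy)]
      have hmeas : (x' + y).toNat < s := by
        have : x' + y < x + y := by linarith
        omega
      exact ih ((x' + y).toNat) hmeas x' y rfl h hy heq'
  intro x y hs hx hy heq
  rcases le_total y x with hxy | hxy
  · exact main x y hs hx hy hxy heq
  · exact main y x (by omega) hy hx hxy (by linear_combination heq)

theorem stmt_4 (n : ℕ) (hodd : Odd n) (hn : 2 < n) (k : ℤ) (hk : 0 < k)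
    (hsol : ∃ x y : ℤ, 0 < x ∧ 0 < y ∧ x ^ 2 - k * x * y + y ^ 2 = 2 ^ n) :
    Even k ∧ k ≤ 2 ^ n - 2 := by
  obtain ⟨x, y, hx, hy, heq⟩ := hsol
  constructor
  · by_contra hke
    rw [Int.not_even_iff_odd] at hke
    exact aux_no_odd_k k hke n hodd x y hx hy heq
  · exact aux_bound n hodd k hk ((x + y).toNat) x y rfl hx hy heq
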